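/- Let Π_{k,μ} = (p₁^{k+1}(p₁^{k+1})ᵀ/‖p₁^{k+1}‖²) ⊗ ⋯ ⊗ (p_{μ−1}^{k+1}(p_{μ−1}^{k+1})ᵀ/‖p_{μ−1}^{k+1}‖²) ⊗ Id ⊗ (p_{μ+1}ᵏ(p_{μ+1}ᵏ)ᵀ/‖p_{μ+1}ᵏ‖²) ⊗ ⋯ ⊗ (p_dᵏ(p_dᵏ)ᵀ/‖p_dᵏ‖²) acting on ⊗_μ ℝ^{n_μ}, with all p's nonzero. Then Π_{k,μ} is an orthogonal projection (symmetric and idempotent), and the ALS micro-step satisfies v_{k,μ+1} = v_{k,μ} + Π_{k,μ}(b − v_{k,μ}), where v_{k,μ} = p₁^{k+1}⊗⋯⊗p_{μ−1}^{k+1}⊗p_μᵏ⊗⋯⊗p_dᵏ and v_{k,μ+1} is obtained by replacing p_μᵏ with the ALS update p_μ^{k+1} = Π-contraction of b. -/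

import Mathlib

open scoped BigOperators

/-- Rank-one tensor in `⊗_{μ} ℝ^{n μ}`, modeled as `EuclideanSpace ℝ (Π μ, Fin (n μ))`. -/
noncomputable def rankOne {d : ℕ} (n : Fin d → ℕ)
    (p : ∀ μ, EuclideanSpace ℝ (Fin (n μ))) :
    EuclideanSpace ℝ (∀ μ, Fin (n μ)) :=
  WithLp.toLp 2 fun i => ∏ μ, p μ (i μ)

/-- The objective function `f(v) = (1/‖b‖²)(½⟨v,v⟩ − ⟨b,v⟩)`. -/
noncomputable def fobj {ι : Type*} [Fintype ι] (b v : EuclideanSpace ℝ ι) : ℝ :=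
  (1 / ‖b‖ ^ 2) * ((1 / 2) * (inner ℝ v v : ℝ) - (inner ℝ b v : ℝ))


/-- The ALS projection `Π_{k,μ}`: the tensor product of the rank-one orthogonal projections
`q_ν q_νᵀ/‖q_ν‖²` for `ν ≠ μ` with the identity at mode `μ`. -/
noncomputable def projALS {d : ℕ} (n : Fin d → ℕ) (μ : Fin d)
    (q : ∀ ν, EuclideanSpace ℝ (Fin (n ν)))
    (x : EuclideanSpace ℝ (∀ ν, Fin (n ν))) : EuclideanSpace ℝ (∀ ν, Fin (n ν)) :=
  WithLp.toLp 2 fun i => ∑ i' : ∀ ν, Fin (n ν),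
    (∏ ν, if ν = μ then (if i' ν = i ν then (1 : ℝ) else 0)
      else q ν (i ν) * q ν (i' ν) / ‖q ν‖ ^ 2) * x i'

noncomputable def Kker {d : ℕ} (n : Fin d → ℕ) (μ : Fin d)
    (q : ∀ ν, EuclideanSpace ℝ (Fin (n ν))) (i i' : ∀ ν, Fin (n ν)) : ℝ :=
  ∏ ν, if ν = μ then (if i' ν = i ν then (1 : ℝ) else 0)
      else q ν (i ν) * q ν (i' ν) / ‖q ν‖ ^ 2

lemma sum_self_eq_norm_sq {m : ℕ} (q : EuclideanSpace ℝ (Fin m)) :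
    ∑ j, q j * q j = ‖q‖ ^ 2 := by
  rw [EuclideanSpace.norm_sq_eq]
  refine Finset.sum_congr rfl fun j _ => ?_
  rw [Real.norm_eq_abs, sq_abs, sq]

lemma sum_prod_swap {d : ℕ} (n : Fin d → ℕ) (f : ∀ ν : Fin d, Fin (n ν) → ℝ) :
    ∑ x : ∀ ν, Fin (n ν), ∏ ν, f ν (x ν) = ∏ ν, ∑ j, f ν j := (Fintype.prod_sum f).symm

lemma Kker_symm {d : ℕ} (n : Fin d → ℕ) (μ : Fin d)
    (q : ∀ ν, EuclideanSpace ℝ (Fin (n ν))) (i i' : ∀ ν, Fin (n ν)) :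
    Kker n μ q i i' = Kker n μ q i' i := by
  refine Finset.prod_congr rfl fun ν _ => ?_
  rcases eq_or_ne ν μ with h | h
  · simp only [if_pos h]
    by_cases h2 : i' ν = i ν
    · simp [h2]
    · rw [if_neg h2, if_neg (mt Eq.symm h2)]
  · simp only [if_neg h]; ring

lemma Kker_mul {d : ℕ} (n : Fin d → ℕ) (μ : Fin d)
    (q : ∀ ν, EuclideanSpace ℝ (Fin (n ν))) (hq : ∀ ν, q ν ≠ 0)
    (i i'' : ∀ ν, Fin (n ν)) :
    ∑ i' : ∀ ν, Fin (n ν), Kker n μ q i i' * Kker n μ q i' i'' = Kker n μ q i i'' := by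
  calc ∑ i' : ∀ ν, Fin (n ν), Kker n μ q i i' * Kker n μ q i' i''
      = ∑ i' : ∀ ν, Fin (n ν), ∏ ν,
        ((fun ν (j : Fin (n ν)) =>
          (if ν = μ then (if j = i ν then (1 : ℝ) else 0)
            else q ν (i ν) * q ν j / ‖q ν‖ ^ 2) *
          (if ν = μ then (if i'' ν = j then (1 : ℝ) else 0)
            else q ν j * q ν (i'' ν) / ‖q ν‖ ^ 2)) ν (i' ν)) := by
        refine Finset.sum_congr rfl fun i' _ => ?_
        rw [Kker, Kker, ← Finset.prod_mul_distrib]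
    _ = ∏ ν, ∑ j, ((if ν = μ then (if j = i ν then (1 : ℝ) else 0)
            else q ν (i ν) * q ν j / ‖q ν‖ ^ 2) *
          (if ν = μ then (if i'' ν = j then (1 : ℝ) else 0)
            else q ν j * q ν (i'' ν) / ‖q ν‖ ^ 2)) :=
        sum_prod_swap n (fun ν j =>
          (if ν = μ then (if j = i ν then (1 : ℝ) else 0)
            else q ν (i ν) * q ν j / ‖q ν‖ ^ 2) *
          (if ν = μ then (if i'' ν = j then (1 : ℝ) else 0)
            else q ν j * q ν (i'' ν) / ‖q ν‖ ^ 2))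
    _ = Kker n μ q i i'' := by
        refine Finset.prod_congr rfl fun ν _ => ?_
        have hN : ‖q ν‖ ≠ 0 := norm_ne_zero_iff.mpr (hq ν)
        rcases eq_or_ne ν μ with h | h
        · simp only [if_pos h, ite_mul, one_mul, zero_mul]
          rw [Finset.sum_ite_eq' Finset.univ (i ν)
            (fun j => if i'' ν = j then (1 : ℝ) else 0)]
          simp
        · simp only [if_neg h]
          have key : ∀ j, (q ν (i ν) * q ν j / ‖q ν‖ ^ 2) * (q ν j * q ν (i'' ν) / ‖q ν‖ ^ 2)
              = (q ν (i ν) * q ν (i'' ν) / ‖q ν‖ ^ 2) * ((q ν j * q ν j) / ‖q ν‖ ^ 2) := by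
            intro j; ring
          simp_rw [key]
          rw [← Finset.mul_sum, ← Finset.sum_div, sum_self_eq_norm_sq,
            div_self (by positivity), mul_one]

lemma Kker_rankOne {d : ℕ} (n : Fin d → ℕ) (μ : Fin d)
    (q : ∀ ν, EuclideanSpace ℝ (Fin (n ν))) (hq : ∀ ν, q ν ≠ 0)
    (i : ∀ ν, Fin (n ν)) :
    ∑ i' : ∀ ν, Fin (n ν), Kker n μ q i i' * rankOne n q i' = rankOne n q i := by
  calc ∑ i' : ∀ ν, Fin (n ν), Kker n μ q i i' * rankOne n q i'
      = ∑ i' : ∀ ν, Fin (n ν), ∏ ν,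
        ((if ν = μ then (if i' ν = i ν then (1 : ℝ) else 0)
            else q ν (i ν) * q ν (i' ν) / ‖q ν‖ ^ 2) * q ν (i' ν)) := by
        refine Finset.sum_congr rfl fun i' _ => ?_
        rw [Kker, rankOne, WithLp.ofLp_toLp, ← Finset.prod_mul_distrib]
    _ = ∏ ν, ∑ j, ((if ν = μ then (if j = i ν then (1 : ℝ) else 0)
            else q ν (i ν) * q ν j / ‖q ν‖ ^ 2) * q ν j) :=
        sum_prod_swap n (fun ν j =>
          (if ν = μ then (if j = i ν then (1 : ℝ) else 0)
            else q ν (i ν) * q ν j / ‖q ν‖ ^ 2) * q ν j)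
    _ = rankOne n q i := by
        rw [rankOne, WithLp.ofLp_toLp]
        refine Finset.prod_congr rfl fun ν _ => ?_
        have hN : ‖q ν‖ ≠ 0 := norm_ne_zero_iff.mpr (hq ν)
        rcases eq_or_ne ν μ with h | h
        · simp [if_pos h, ite_mul, Finset.sum_ite_eq']
        · simp only [if_neg h]
          have key : ∀ j, (q ν (i ν) * q ν j / ‖q ν‖ ^ 2) * q ν j
              = q ν (i ν) * ((q ν j * q ν j) / ‖q ν‖ ^ 2) := by intro j; ring
          simp_rw [key]
          rw [← Finset.mul_sum, ← Finset.sum_div, sum_self_eq_norm_sq,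
            div_self (by positivity), mul_one]

lemma projALS_apply {d : ℕ} (n : Fin d → ℕ) (μ : Fin d)
    (q : ∀ ν, EuclideanSpace ℝ (Fin (n ν)))
    (x : EuclideanSpace ℝ (∀ ν, Fin (n ν))) (i : ∀ ν, Fin (n ν)) :
    projALS n μ q x i = ∑ i' : ∀ ν, Fin (n ν), Kker n μ q i i' * x i' := rfl

/-- `Π_{k,μ}` is an orthogonal projection (symmetric and idempotent), and the ALS micro
step satisfies `v_{k,μ+1} = v_{k,μ} + Π_{k,μ}(b − v_{k,μ})`, where `v_{k,μ+1}` is obtained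
from `v_{k,μ}` by replacing the `μ`-th factor with the ALS update. -/
theorem stmt18 {d : ℕ} (n : Fin d → ℕ) (μ : Fin d)
    (b : EuclideanSpace ℝ (∀ ν, Fin (n ν)))
    (q : ∀ ν, EuclideanSpace ℝ (Fin (n ν))) (hq : ∀ ν, q ν ≠ 0)
    (pnew : EuclideanSpace ℝ (Fin (n μ)))
    (hpnew : pnew = (WithLp.toLp 2 fun jμ => ∑ i : ∀ ν, Fin (n ν),
      if i μ = jμ then (∏ ν ∈ Finset.univ.erase μ, q ν (i ν) / ‖q ν‖ ^ 2) * b i else 0 :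
        EuclideanSpace ℝ (Fin (n μ)))) :
    (∀ x y : EuclideanSpace ℝ (∀ ν, Fin (n ν)),
        (inner ℝ (projALS n μ q x) y : ℝ) = (inner ℝ x (projALS n μ q y) : ℝ)) ∧
      (∀ x, projALS n μ q (projALS n μ q x) = projALS n μ q x) ∧
      rankOne n (Function.update q μ pnew)
        = rankOne n q + projALS n μ q (b - rankOne n q) := by
  refine ⟨?_, ?_, ?_⟩
  · -- symmetry
    intro x y
    simp only [PiLp.inner_apply, RCLike.inner_apply, conj_trivial, projALS_apply]
    simp_rw [Finset.sum_mul, Finset.mul_sum]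
    rw [Finset.sum_comm]
    refine Finset.sum_congr rfl fun i' _ => Finset.sum_congr rfl fun i _ => ?_
    rw [Kker_symm n μ q i i']
    ring
  · -- idempotent
    intro x
    ext i
    rw [projALS_apply]
    simp_rw [projALS_apply]
    calc ∑ i', Kker n μ q i i' * ∑ i'', Kker n μ q i' i'' * x i''
        = ∑ i', ∑ i'', Kker n μ q i i' * Kker n μ q i' i'' * x i'' := by
          simp_rw [Finset.mul_sum, mul_assoc]
      _ = ∑ i'', ∑ i', Kker n μ q i i' * Kker n μ q i' i'' * x i'' := Finset.sum_comm
      _ = ∑ i'', Kker n μ q i i'' * x i'' := by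
          refine Finset.sum_congr rfl fun i'' _ => ?_
          rw [← Finset.sum_mul, Kker_mul n μ q hq]
  · -- ALS micro-step
    ext i
    have hsub : (rankOne n q + projALS n μ q (b - rankOne n q)) i
        = rankOne n q i + ∑ i', Kker n μ q i i' * (b i' - rankOne n q i') := rfl
    rw [hsub]
    simp_rw [mul_sub, Finset.sum_sub_distrib, Kker_rankOne n μ q hq i]
    rw [add_sub_cancel]
    -- now: rankOne n (update q μ pnew) i = ∑ i', Kker n μ q i i' * b i'
    have hL : rankOne n (Function.update q μ pnew) i
        = pnew (i μ) * ∏ ν ∈ Finset.univ.erase μ, q ν (i ν) := by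
      rw [rankOne, WithLp.ofLp_toLp, ← Finset.mul_prod_erase Finset.univ _ (Finset.mem_univ μ),
        Function.update_self]
      congr 1
      refine Finset.prod_congr rfl fun ν hν => ?_
      rw [Function.update_of_ne (Finset.ne_of_mem_erase hν)]
    rw [hL, hpnew, WithLp.ofLp_toLp]
    rw [Finset.sum_mul]
    refine Finset.sum_congr rfl fun i' _ => ?_
    have hK : Kker n μ q i i'
        = (if i' μ = i μ then (1:ℝ) else 0) *
          ∏ ν ∈ Finset.univ.erase μ, q ν (i ν) * q ν (i' ν) / ‖q ν‖ ^ 2 := by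
      rw [Kker, ← Finset.mul_prod_erase Finset.univ _ (Finset.mem_univ μ), if_pos rfl]
      congr 1
      refine Finset.prod_congr rfl fun ν hν => ?_
      rw [if_neg (Finset.ne_of_mem_erase hν)]
    rw [hK]
    by_cases h : i' μ = i μ
    · rw [if_pos h, if_pos h, one_mul]
      rw [mul_comm, ← mul_assoc, ← Finset.prod_mul_distrib]
      congr 1
      refine Finset.prod_congr rfl fun ν _ => ?_
      ring
    · simp [h]
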